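/- Suppose m ≡ 22 (mod 48), and write m = 48q + 22 with q a nonnegative integer. Then j′, j″, j‴ ∈ J, the products P(j′), P(j″), P(j‴) are all nonzero, and V(j′) = V(j″) = V(j‴) = 32q + 10 − s(q) = (2/3)(m−1) − s((2/3)(m−1)) − 1. -/

import Mathlib

open Finset

/-- `s a` is the sum of the binary digits of `a`. -/
def sdig (a : ℕ) : ℕ := (Nat.digits 2 a).sum

/-- `carries a b` is the number of carries when adding `a` and `b` in base 2:
`c(a,b) = s(a) + s(b) - s(a+b)`. -/
def carries (a b : ℕ) : ℕ := sdig a + sdig b - sdig (a + b)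

/-- The generalized binomial coefficient `C_r(x) = x(x-1)⋯(x-r+1)/r!` (with `C_0(x) = 1`). -/
def genBinom (x : ℚ) (r : ℕ) : ℚ :=
  (∏ p ∈ Finset.range r, (x - p)) / (Nat.factorial r : ℚ)

/-- Membership in the index set `J`: here `j i` (for `i : Fin n`) is the paper's
`j_{i+1}`, so the defining relation `(2^n-1)j_1 + ⋯ + (2-1)j_n = m+1` becomes
`∑ k, (2^(n-k) - 1) * j k = m + 1`. -/
def inJ (n m : ℕ) (j : Fin n → ℕ) : Prop :=
  ∑ k : Fin n, (2 ^ (n - (k : ℕ)) - 1) * j k = m + 1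

/-- `α_j(k)`: for `K : Fin n`, `alphaF n m j K` is the paper's `α_j(K+1)`, i.e.
`m / 2^(n-K) - ∑_{I < K} 2^(K-I) j_{I+1}`. -/
def alphaF (n m : ℕ) (j : Fin n → ℕ) (K : Fin n) : ℚ :=
  (m : ℚ) / 2 ^ (n - (K : ℕ)) -
    ∑ I : Fin n, if (I : ℕ) < (K : ℕ) then 2 ^ ((K : ℕ) - (I : ℕ)) * (j I : ℚ) else 0

/-- `P(j) = ∏_{k=1}^n C_{j_k}(α_j(k))`. -/
def Pprod (n m : ℕ) (j : Fin n → ℕ) : ℚ :=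
  ∏ k : Fin n, genBinom (alphaF n m j k) (j k)

/-- `V(j) = -ν(P(j))`, where `ν` is the 2-adic valuation on `ℚ`. -/
def V (n m : ℕ) (j : Fin n → ℕ) : ℤ := - padicValRat 2 (Pprod n m j)

lemma sdig_two_mul (k : ℕ) : sdig (2 * k) = sdig k := by
  rcases Nat.eq_zero_or_pos k with h | h
  · simp [h, sdig]
  · unfold sdig
    rw [Nat.digits_def' (by norm_num : 1 < 2) (by omega)]
    have h1 : 2 * k % 2 = 0 := by omega
    have h2 : 2 * k / 2 = k := by omega
    rw [h1, h2]; simp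

lemma sdig_two_mul_add_one (k : ℕ) : sdig (2 * k + 1) = sdig k + 1 := by
  unfold sdig
  rw [Nat.digits_def' (by norm_num : 1 < 2) (by omega)]
  have h1 : (2 * k + 1) % 2 = 1 := by omega
  have h2 : (2 * k + 1) / 2 = k := by omega
  rw [h1, h2]; simp [Nat.add_comm]

lemma sdig_le (n : ℕ) : sdig n ≤ n := by
  induction n using Nat.strong_induction_on with
  | _ n ih =>
    rcases Nat.eq_zero_or_pos n with h | h
    · simp [h, sdig]
    · rcases Nat.even_or_odd n with ⟨k, hk⟩ | ⟨k, hk⟩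
      · have hk' : n = 2 * k := by omega
        subst hk'
        rw [sdig_two_mul]
        have := ih k (by omega)
        omega
      · subst hk
        rw [sdig_two_mul_add_one]
        have := ih k (by omega)
        omega

lemma padicValNat_fac (r : ℕ) : padicValNat 2 (Nat.factorial r) = r - sdig r := by
  have := sub_one_mul_padicValNat_factorial (p := 2) r
  simpa [sdig] using this

lemma padicValRat_fac (r : ℕ) : padicValRat 2 ((Nat.factorial r : ℚ)) = (r : ℤ) - sdig r := by
  rw [show ((Nat.factorial r : ℚ)) = ((Nat.factorial r : ℕ) : ℚ) by push_cast; ring, padicValRat.of_nat, padicValNat_fac]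
  have := sdig_le r
  push_cast [Nat.cast_sub this]
  ring

lemma oddl (k : ℤ) : Odd (2 * k + 1) := ⟨k, by ring⟩

lemma odd_ne_zero' {a : ℤ} (ha : Odd a) : (a : ℚ) ≠ 0 := by
  obtain ⟨k, hk⟩ := ha
  have : a ≠ 0 := by omega
  exact_mod_cast this

lemma padicValRat_odd {a : ℤ} (ha : Odd a) : padicValRat 2 (a : ℚ) = 0 := by
  rw [padicValRat.of_int, padicValInt.eq_zero_of_not_dvd]
  · simp
  · obtain ⟨k, hk⟩ := ha
    omega

lemma padicValRat_prod {ι : Type*} (s : Finset ι) (f : ι → ℚ) (hf : ∀ i ∈ s, f i ≠ 0) :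
    padicValRat 2 (∏ i ∈ s, f i) = ∑ i ∈ s, padicValRat 2 (f i) := by
  classical
  induction s using Finset.induction_on with
  | empty => simp
  | @insert a s ha ih =>
    rw [Finset.prod_insert ha, Finset.sum_insert ha,
      padicValRat.mul (hf a (Finset.mem_insert_self a s))
        (Finset.prod_ne_zero_iff.mpr fun i hi => hf i (Finset.mem_insert_of_mem hi)),
      ih fun i hi => hf i (Finset.mem_insert_of_mem hi)]

lemma padicValRat_two : padicValRat 2 (2 : ℚ) = 1 := by
  have := padicValRat.self (p := 2) (by norm_num)
  simpa using this

lemma padicValRat_four : padicValRat 2 (4 : ℚ) = 2 := by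
  rw [show (4 : ℚ) = 2 ^ 2 by norm_num, padicValRat.pow (2 : ℚ), padicValRat_two]
  ring

lemma genBinom_one (x : ℚ) : genBinom x 1 = x := by
  simp [genBinom, Nat.factorial]

lemma genBinom_two (x : ℚ) : genBinom x 2 = x * (x - 1) / 2 := by
  simp [genBinom, Finset.prod_range_succ, Nat.factorial]

lemma genBinom_five (x : ℚ) :
    genBinom x 5 = x * (x - 1) * (x - 2) * (x - 3) * (x - 4) / 120 := by
  simp [genBinom, Finset.prod_range_succ, Nat.factorial]

lemma genBinom_half_factor_ne (d : ℕ) (p : ℕ) : ((2 * (d : ℚ) + 1) / 2 - p) ≠ 0 := by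
  have key : ((2 * (d : ℚ) + 1) / 2 - p) = ((2 * ((d : ℤ) - p) + 1 : ℤ) : ℚ) / 2 := by
    push_cast; ring
  rw [key]
  exact div_ne_zero (odd_ne_zero' (oddl _)) (by norm_num)

lemma genBinom_half_ne (d r : ℕ) : genBinom ((2 * (d : ℚ) + 1) / 2) r ≠ 0 := by
  unfold genBinom
  exact div_ne_zero (Finset.prod_ne_zero_iff.mpr fun p _ => genBinom_half_factor_ne d p)
    (by exact_mod_cast Nat.factorial_ne_zero r)

lemma genBinom_half_val (d r : ℕ) :
    padicValRat 2 (genBinom ((2 * (d : ℚ) + 1) / 2) r) = -(2 * (r : ℤ)) + sdig r := by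
  unfold genBinom
  rw [padicValRat.div (Finset.prod_ne_zero_iff.mpr fun p _ => genBinom_half_factor_ne d p)
    (by exact_mod_cast Nat.factorial_ne_zero r),
    padicValRat_prod _ _ (fun p _ => genBinom_half_factor_ne d p), padicValRat_fac]
  have hval : ∀ p ∈ Finset.range r, padicValRat 2 ((2 * (d : ℚ) + 1) / 2 - p) = -1 := by
    intro p _
    have key : ((2 * (d : ℚ) + 1) / 2 - p) = ((2 * ((d : ℤ) - p) + 1 : ℤ) : ℚ) / 2 := by
      push_cast; ring
    rw [key, padicValRat.div (odd_ne_zero' (oddl _)) (by norm_num), padicValRat_odd (oddl _),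
      padicValRat_two]
    ring
  rw [Finset.sum_congr rfl hval, Finset.sum_const, Finset.card_range]
  skip
  ring

lemma Pprod_support {n m : ℕ} {j : Fin n → ℕ} (S : Finset (Fin n))
    (h : ∀ k, k ∉ S → j k = 0) :
    Pprod n m j = ∏ k ∈ S, genBinom (alphaF n m j k) (j k) :=
  (Finset.prod_subset (Finset.subset_univ S)
    (fun x _ hx => by rw [h x hx]; simp [genBinom])).symm

lemma inJ_support {n m : ℕ} {j : Fin n → ℕ} (S : Finset (Fin n))
    (h : ∀ k, k ∉ S → j k = 0) :
    inJ n m j ↔ ∑ k ∈ S, (2 ^ (n - (k : ℕ)) - 1) * j k = m + 1 := by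
  unfold inJ
  rw [← Finset.sum_subset (Finset.subset_univ S)
    (fun x _ hx => by rw [h x hx, Nat.mul_zero])]

lemma alphaF_support {n m : ℕ} {j : Fin n → ℕ} (S : Finset (Fin n))
    (h : ∀ k, k ∉ S → j k = 0) (K : Fin n) :
    alphaF n m j K = (m : ℚ) / 2 ^ (n - (K : ℕ)) -
      ∑ I ∈ S, (if (I : ℕ) < (K : ℕ) then 2 ^ ((K : ℕ) - (I : ℕ)) * (j I : ℚ) else 0) := by
  unfold alphaF
  rw [← Finset.sum_subset (Finset.subset_univ S)
    (fun x _ hx => by rw [h x hx]; simp)]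

/-- If `m = 48q + 22`, then `j', j'', j‴ ∈ J`, the products `P(j')`, `P(j'')`,
`P(j‴)` are all nonzero, and
`V(j') = V(j'') = V(j‴) = 32q + 10 - s(q) = (2/3)(m-1) - s((2/3)(m-1)) - 1`. -/
theorem stmt16 (n m q : ℕ) (hn : 3 ≤ n) (hm : 1 ≤ m) (hmn : m ≤ 2 ^ (n + 1) - 3)
    (hq : m = 48 * q + 22)
    (j1 : Fin n → ℕ)
    (hj1 : j1 = fun k : Fin n =>
      if (k : ℕ) = n - 2 then (m - 1) / 3 else if (k : ℕ) = n - 1 then 2 else 0)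
    (j2 : Fin n → ℕ)
    (hj2 : j2 = fun k : Fin n =>
      if (k : ℕ) = n - 2 then (m - 4) / 3 else if (k : ℕ) = n - 1 then 5 else 0)
    (j3 : Fin n → ℕ)
    (hj3 : j3 = fun k : Fin n =>
      if (k : ℕ) = n - 3 then 1
      else if (k : ℕ) = n - 2 then (m - 7) / 3
      else if (k : ℕ) = n - 1 then 1 else 0) :
    inJ n m j1 ∧ inJ n m j2 ∧ inJ n m j3 ∧
      Pprod n m j1 ≠ 0 ∧ Pprod n m j2 ≠ 0 ∧ Pprod n m j3 ≠ 0 ∧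
      V n m j1 = V n m j2 ∧ V n m j2 = V n m j3 ∧
      V n m j3 = (32 * q + 10 : ℤ) - sdig q ∧
      (32 * q + 10 : ℤ) - sdig q =
        ((2 * (m - 1)) / 3 : ℕ) - (sdig ((2 * (m - 1)) / 3) : ℤ) - 1 := by
  subst hq
  -- digit sums
  have s167 : sdig (16 * q + 7) = sdig q + 3 := by
    rw [show 16 * q + 7 = 2 * (8 * q + 3) + 1 by ring, sdig_two_mul_add_one,
      show 8 * q + 3 = 2 * (4 * q + 1) + 1 by ring, sdig_two_mul_add_one,
      show 4 * q + 1 = 2 * (2 * q) + 1 by ring, sdig_two_mul_add_one, sdig_two_mul]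
  have s166 : sdig (16 * q + 6) = sdig q + 2 := by
    rw [show 16 * q + 6 = 2 * (8 * q + 3) by ring, sdig_two_mul,
      show 8 * q + 3 = 2 * (4 * q + 1) + 1 by ring, sdig_two_mul_add_one,
      show 4 * q + 1 = 2 * (2 * q) + 1 by ring, sdig_two_mul_add_one, sdig_two_mul]
  have s165 : sdig (16 * q + 5) = sdig q + 2 := by
    rw [show 16 * q + 5 = 2 * (8 * q + 2) + 1 by ring, sdig_two_mul_add_one,
      show 8 * q + 2 = 2 * (4 * q + 1) by ring, sdig_two_mul,
      show 4 * q + 1 = 2 * (2 * q) + 1 by ring, sdig_two_mul_add_one, sdig_two_mul]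
  have s3214 : sdig (32 * q + 14) = sdig q + 3 := by
    rw [show 32 * q + 14 = 2 * (16 * q + 7) by ring, sdig_two_mul, s167]
  -- the three distinguished indices
  have ha' : n - 3 < n := by omega
  have hb' : n - 2 < n := by omega
  have hc' : n - 1 < n := by omega
  set a : Fin n := ⟨n - 3, ha'⟩ with hadef
  set b : Fin n := ⟨n - 2, hb'⟩ with hbdef
  set c : Fin n := ⟨n - 1, hc'⟩ with hcdef
  have va : (a : ℕ) = n - 3 := rfl
  have vb : (b : ℕ) = n - 2 := rfl
  have vc : (c : ℕ) = n - 1 := rfl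
  have hab : a ≠ b := by simp only [ne_eq, hadef, hbdef, Fin.mk.injEq]; omega
  have hac : a ≠ c := by simp only [ne_eq, hadef, hcdef, Fin.mk.injEq]; omega
  have hbc : b ≠ c := by simp only [ne_eq, hbdef, hcdef, Fin.mk.injEq]; omega
  -- values of j1, j2, j3
  have hne2 : n - 1 ≠ n - 2 := by omega
  have hne3 : n - 2 ≠ n - 3 := by omega
  have hne3' : n - 1 ≠ n - 3 := by omega
  have h1b : j1 b = 16 * q + 7 := by rw [hj1]; simp [vb]; omega
  have h1c : j1 c = 2 := by rw [hj1]; simp [vc, hne2]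
  have h2b : j2 b = 16 * q + 6 := by rw [hj2]; simp [vb]; omega
  have h2c : j2 c = 5 := by rw [hj2]; simp [vc, hne2]
  have h3a : j3 a = 1 := by rw [hj3]; simp [va]
  have h3b : j3 b = 16 * q + 5 := by rw [hj3]; simp [vb, hne3]; omega
  have h3c : j3 c = 1 := by rw [hj3]; simp [vc, hne3', hne2]
  -- supports
  have hs1 : ∀ k : Fin n, k ∉ ({b, c} : Finset (Fin n)) → j1 k = 0 := by
    intro k hk
    simp only [Finset.mem_insert, Finset.mem_singleton, not_or] at hk
    have e1 : (k : ℕ) ≠ n - 2 := fun h => hk.1 (Fin.ext h)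
    have e2 : (k : ℕ) ≠ n - 1 := fun h => hk.2 (Fin.ext h)
    simp only [hj1, if_neg e1, if_neg e2]
  have hs2 : ∀ k : Fin n, k ∉ ({b, c} : Finset (Fin n)) → j2 k = 0 := by
    intro k hk
    simp only [Finset.mem_insert, Finset.mem_singleton, not_or] at hk
    have e1 : (k : ℕ) ≠ n - 2 := fun h => hk.1 (Fin.ext h)
    have e2 : (k : ℕ) ≠ n - 1 := fun h => hk.2 (Fin.ext h)
    simp only [hj2, if_neg e1, if_neg e2]
  have hs3 : ∀ k : Fin n, k ∉ ({a, b, c} : Finset (Fin n)) → j3 k = 0 := by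
    intro k hk
    simp only [Finset.mem_insert, Finset.mem_singleton, not_or] at hk
    have e0 : (k : ℕ) ≠ n - 3 := fun h => hk.1 (Fin.ext h)
    have e1 : (k : ℕ) ≠ n - 2 := fun h => hk.2.1 (Fin.ext h)
    have e2 : (k : ℕ) ≠ n - 1 := fun h => hk.2.2 (Fin.ext h)
    simp only [hj3, if_neg e0, if_neg e1, if_neg e2]
  have hanbc : a ∉ ({b, c} : Finset (Fin n)) := by
    simp only [Finset.mem_insert, Finset.mem_singleton, not_or]
    exact ⟨hab, hac⟩
  -- exponents
  have enb : n - (b : ℕ) = 2 := by rw [vb]; omega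
  have enc : n - (c : ℕ) = 1 := by rw [vc]; omega
  have ena : n - (a : ℕ) = 3 := by rw [va]; omega
  have ecb : (c : ℕ) - (b : ℕ) = 1 := by rw [vb, vc]; omega
  have eca : (c : ℕ) - (a : ℕ) = 2 := by rw [va, vc]; omega
  have eba : (b : ℕ) - (a : ℕ) = 1 := by rw [va, vb]; omega
  have ltbc : (b : ℕ) < (c : ℕ) := by rw [vb, vc]; omega
  have ltab : (a : ℕ) < (b : ℕ) := by rw [va, vb]; omega
  have ltac : (a : ℕ) < (c : ℕ) := by rw [va, vc]; omega
  have nltbb : ¬ (b : ℕ) < (b : ℕ) := by omega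
  have nltcc : ¬ (c : ℕ) < (c : ℕ) := by omega
  have nltcb : ¬ (c : ℕ) < (b : ℕ) := by rw [vb, vc]; omega
  have nltaa : ¬ (a : ℕ) < (a : ℕ) := by omega
  have nltba : ¬ (b : ℕ) < (a : ℕ) := by rw [va, vb]; omega
  have nltca : ¬ (c : ℕ) < (a : ℕ) := by rw [va, vc]; omega
  -- inJ
  have hJ1 : inJ n (48 * q + 22) j1 := by
    rw [inJ_support {b, c} hs1, Finset.sum_pair hbc, h1b, h1c, enb, enc]
    norm_num; omega
  have hJ2 : inJ n (48 * q + 22) j2 := by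
    rw [inJ_support {b, c} hs2, Finset.sum_pair hbc, h2b, h2c, enb, enc]
    norm_num; omega
  have hJ3 : inJ n (48 * q + 22) j3 := by
    rw [inJ_support {a, b, c} hs3, Finset.sum_insert hanbc, Finset.sum_pair hbc,
      h3a, h3b, h3c, ena, enb, enc]
    norm_num; omega
  -- alpha values
  have hA1b : alphaF n (48 * q + 22) j1 b = (2 * ((12 * q + 5 : ℕ) : ℚ) + 1) / 2 := by
    rw [alphaF_support {b, c} hs1, Finset.sum_pair hbc, if_neg nltbb, if_neg nltcb, enb]
    push_cast; ring
  have hA1c : alphaF n (48 * q + 22) j1 c = -(8 * (q : ℚ) + 3) := by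
    rw [alphaF_support {b, c} hs1, Finset.sum_pair hbc, if_pos ltbc, if_neg nltcc, enc,
      ecb, h1b]
    push_cast; ring
  have hA2b : alphaF n (48 * q + 22) j2 b = (2 * ((12 * q + 5 : ℕ) : ℚ) + 1) / 2 := by
    rw [alphaF_support {b, c} hs2, Finset.sum_pair hbc, if_neg nltbb, if_neg nltcb, enb]
    push_cast; ring
  have hA2c : alphaF n (48 * q + 22) j2 c = -(8 * (q : ℚ) + 1) := by
    rw [alphaF_support {b, c} hs2, Finset.sum_pair hbc, if_pos ltbc, if_neg nltcc, enc,
      ecb, h2b]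
    push_cast; ring
  have hA3a : alphaF n (48 * q + 22) j3 a
      = ((2 * (12 * (q : ℤ) + 5) + 1 : ℤ) : ℚ) / 4 := by
    rw [alphaF_support {a, b, c} hs3, Finset.sum_insert hanbc, Finset.sum_pair hbc,
      if_neg nltaa, if_neg nltba, if_neg nltca, ena]
    push_cast; ring
  have hA3b : alphaF n (48 * q + 22) j3 b = (2 * ((12 * q + 3 : ℕ) : ℚ) + 1) / 2 := by
    rw [alphaF_support {a, b, c} hs3, Finset.sum_insert hanbc, Finset.sum_pair hbc,
      if_pos ltab, if_neg nltbb, if_neg nltcb, enb, eba, h3a]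
    push_cast; ring
  have hA3c : alphaF n (48 * q + 22) j3 c = ((-(8 * (q : ℤ) + 3) : ℤ) : ℚ) := by
    rw [alphaF_support {a, b, c} hs3, Finset.sum_insert hanbc, Finset.sum_pair hbc,
      if_pos ltac, if_pos ltbc, if_neg nltcc, enc, eca, ecb, h3a, h3b]
    push_cast; ring
  -- products
  have hP1 : Pprod n (48 * q + 22) j1
      = genBinom ((2 * ((12 * q + 5 : ℕ) : ℚ) + 1) / 2) (16 * q + 7)
        * genBinom (-(8 * (q : ℚ) + 3)) 2 := by
    rw [Pprod_support {b, c} hs1, Finset.prod_pair hbc, hA1b, hA1c, h1b, h1c]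
  have hP2 : Pprod n (48 * q + 22) j2
      = genBinom ((2 * ((12 * q + 5 : ℕ) : ℚ) + 1) / 2) (16 * q + 6)
        * genBinom (-(8 * (q : ℚ) + 1)) 5 := by
    rw [Pprod_support {b, c} hs2, Finset.prod_pair hbc, hA2b, hA2c, h2b, h2c]
  have hP3 : Pprod n (48 * q + 22) j3
      = genBinom (((2 * (12 * (q : ℤ) + 5) + 1 : ℤ) : ℚ) / 4) 1
        * (genBinom ((2 * ((12 * q + 3 : ℕ) : ℚ) + 1) / 2) (16 * q + 5)
          * genBinom (((-(8 * (q : ℤ) + 3) : ℤ) : ℚ)) 1) := by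
    rw [Pprod_support {a, b, c} hs3, Finset.prod_insert hanbc, Finset.prod_pair hbc,
      hA3a, hA3b, hA3c, h3a, h3b, h3c]
  -- small-factor analysis
  have g2eq : genBinom (-(8 * (q : ℚ) + 3)) 2
      = 2 * ((2 * (8 * (q : ℤ) ^ 2 + 7 * q + 1) + 1 : ℤ) : ℚ) := by
    rw [genBinom_two]; push_cast; ring
  have g2ne : genBinom (-(8 * (q : ℚ) + 3)) 2 ≠ 0 := by
    rw [g2eq]; exact mul_ne_zero (by norm_num) (odd_ne_zero' (oddl _))
  have g2val : padicValRat 2 (genBinom (-(8 * (q : ℚ) + 3)) 2) = 1 := by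
    rw [g2eq, padicValRat.mul (by norm_num) (odd_ne_zero' (oddl _)), padicValRat_two,
      padicValRat_odd (oddl _)]
    ring
  have g5eq : genBinom (-(8 * (q : ℚ) + 1)) 5
      = ((-((8 * (q : ℤ) + 1) * (8 * q + 3) * (8 * q + 5) * (4 * q + 1) * (2 * q + 1)) : ℤ) : ℚ)
        / ((15 : ℤ) : ℚ) := by
    rw [genBinom_five]; push_cast; ring
  have hodd5 : Odd (-((8 * (q : ℤ) + 1) * (8 * q + 3) * (8 * q + 5) * (4 * q + 1) * (2 * q + 1))) := by
    refine Odd.neg ?_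
    exact Odd.mul (Odd.mul (Odd.mul (Odd.mul
      (⟨4 * q, by ring⟩ : Odd (8 * (q : ℤ) + 1)) ⟨4 * q + 1, by ring⟩)
      ⟨4 * q + 2, by ring⟩) ⟨2 * q, by ring⟩) ⟨q, by ring⟩
  have hodd15 : Odd (15 : ℤ) := ⟨7, by norm_num⟩
  have g5ne : genBinom (-(8 * (q : ℚ) + 1)) 5 ≠ 0 := by
    rw [g5eq]; exact div_ne_zero (odd_ne_zero' hodd5) (odd_ne_zero' hodd15)
  have g5val : padicValRat 2 (genBinom (-(8 * (q : ℚ) + 1)) 5) = 0 := by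
    rw [g5eq, padicValRat.div (odd_ne_zero' hodd5) (odd_ne_zero' hodd15),
      padicValRat_odd hodd5, padicValRat_odd hodd15]
    ring
  have gAne : genBinom (((2 * (12 * (q : ℤ) + 5) + 1 : ℤ) : ℚ) / 4) 1 ≠ 0 := by
    rw [genBinom_one]
    exact div_ne_zero (odd_ne_zero' (oddl _)) (by norm_num)
  have gAval : padicValRat 2 (genBinom (((2 * (12 * (q : ℤ) + 5) + 1 : ℤ) : ℚ) / 4) 1)
      = -2 := by
    rw [genBinom_one, padicValRat.div (odd_ne_zero' (oddl _)) (by norm_num),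
      padicValRat_odd (oddl _), padicValRat_four]
    ring
  have hoddC : Odd (-(8 * (q : ℤ) + 3)) := ⟨-(4 * q + 2), by ring⟩
  have gCne : genBinom (((-(8 * (q : ℤ) + 3) : ℤ) : ℚ)) 1 ≠ 0 := by
    rw [genBinom_one]; exact odd_ne_zero' hoddC
  have gCval : padicValRat 2 (genBinom (((-(8 * (q : ℤ) + 3) : ℤ) : ℚ)) 1) = 0 := by
    rw [genBinom_one]; exact padicValRat_odd hoddC
  -- nonvanishing
  have hne1 : Pprod n (48 * q + 22) j1 ≠ 0 := by
    rw [hP1]; exact mul_ne_zero (genBinom_half_ne _ _) g2ne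
  have hne2' : Pprod n (48 * q + 22) j2 ≠ 0 := by
    rw [hP2]; exact mul_ne_zero (genBinom_half_ne _ _) g5ne
  have hne3'' : Pprod n (48 * q + 22) j3 ≠ 0 := by
    rw [hP3]; exact mul_ne_zero gAne (mul_ne_zero (genBinom_half_ne _ _) gCne)
  -- valuations
  have v1 : padicValRat 2 (Pprod n (48 * q + 22) j1) = -(32 * (q : ℤ) + 10) + sdig q := by
    rw [hP1, padicValRat.mul (genBinom_half_ne _ _) g2ne, genBinom_half_val, g2val, s167]
    push_cast; ring
  have v2 : padicValRat 2 (Pprod n (48 * q + 22) j2) = -(32 * (q : ℤ) + 10) + sdig q := by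
    rw [hP2, padicValRat.mul (genBinom_half_ne _ _) g5ne, genBinom_half_val, g5val, s166]
    push_cast; ring
  have v3 : padicValRat 2 (Pprod n (48 * q + 22) j3) = -(32 * (q : ℤ) + 10) + sdig q := by
    rw [hP3, padicValRat.mul gAne (mul_ne_zero (genBinom_half_ne _ _) gCne),
      padicValRat.mul (genBinom_half_ne _ _) gCne, genBinom_half_val, gAval, gCval, s165]
    push_cast; ring
  refine ⟨hJ1, hJ2, hJ3, hne1, hne2', hne3'', ?_, ?_, ?_, ?_⟩
  · unfold V; rw [v1, v2]
  · unfold V; rw [v2, v3]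
  · unfold V; rw [v3]; ring
  · have e : 2 * (48 * q + 22 - 1) / 3 = 32 * q + 14 := by omega
    rw [e, s3214]
    push_cast; ring
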